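/- Let 𝓑 = 𝓑_1 ∪ ⋯ ∪ 𝓑_q be a partition of 𝓑 into nonempty parts and let B_i ∈ 𝓑_i for i = 1,…,q. Then for every measure * ∈ {B, BA, TA, C, BC, L}, OPT_*(𝓑) ≥ Σ_{i=1}^{q} min{ price_*(B_i, B) : B ∈ 𝓑 \ 𝓑_i }. -/

import Mathlib

open Finset

variable {V : Type*} [Fintype V] [DecidableEq V]

/-- A pure Horn CNF is a finite set of clauses `(B, v)`: body `B`, head `v`,
with `B` nonempty and `v ∉ B`. -/
def PureHorn (Φ : Finset (Finset V × V)) : Prop :=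
  ∀ c ∈ Φ, c.1.Nonempty ∧ c.2 ∉ c.1

/-- A set `W` is closed under the clauses of `Φ`. -/
def HornClosed (Φ : Finset (Finset V × V)) (W : Set V) : Prop :=
  ∀ c ∈ Φ, ↑c.1 ⊆ W → c.2 ∈ W

/-- Forward-chaining closure `F_Φ(Z)`: the smallest set containing `Z`
that is closed under the clauses of `Φ`. -/
def hornClosure (Φ : Finset (Finset V × V)) (Z : Set V) : Set V :=
  ⋂₀ {W : Set V | Z ⊆ W ∧ HornClosed Φ W}

/-- `Ψ_𝓑 = ⋀_{B ∈ 𝓑} B → (V \ B)`. -/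
def keyCNF (𝓑 : Finset (Finset V)) : Finset (Finset V × V) :=
  𝓑.biUnion fun B => (Finset.univ \ B).image fun v => (B, v)

/-- `Φ` represents the key Horn function `h_𝓑`, i.e. `Φ` is a pure Horn CNF
equivalent to `Ψ_𝓑`. -/
def Represents (𝓑 : Finset (Finset V)) (Φ : Finset (Finset V × V)) : Prop :=
  PureHorn Φ ∧ ∀ Z : Finset V, hornClosure Φ ↑Z = hornClosure (keyCNF 𝓑) ↑Z

/-- (B) number of (distinct) bodies. -/
def sizeB (Φ : Finset (Finset V × V)) : ℕ := (Φ.image Prod.fst).card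
/-- (BA) body area `Σ_i |B_i|` over the distinct bodies. -/
def sizeBA (Φ : Finset (Finset V × V)) : ℕ := ∑ B ∈ Φ.image Prod.fst, B.card
/-- (C) number of clauses `Σ_i |H_i|`. -/
def sizeC (Φ : Finset (Finset V × V)) : ℕ := Φ.card
/-- (TA) total area `Σ_i (|B_i| + |H_i|)`. -/
def sizeTA (Φ : Finset (Finset V × V)) : ℕ := sizeBA Φ + sizeC Φ
/-- (BC) bodies plus clauses `Σ_i (|H_i| + 1)`. -/
def sizeBC (Φ : Finset (Finset V × V)) : ℕ := sizeB Φ + sizeC Φ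
/-- (L) number of literals `Σ_i (|B_i| + 1)·|H_i|`. -/
def sizeL (Φ : Finset (Finset V × V)) : ℕ := ∑ c ∈ Φ, (c.1.card + 1)

/-- `μ` is one of the six size measures. -/
def IsMeasure (μ : Finset (Finset V × V) → ℕ) : Prop :=
  μ = sizeB ∨ μ = sizeBA ∨ μ = sizeTA ∨ μ = sizeC ∨ μ = sizeBC ∨ μ = sizeL

/-- `OPT_μ(𝓑)`: minimum `μ`-size of a CNF representing `h_𝓑`. -/
noncomputable def OPT (μ : Finset (Finset V × V) → ℕ) (𝓑 : Finset (Finset V)) : ℕ :=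
  sInf {s : ℕ | ∃ Φ : Finset (Finset V × V), Represents 𝓑 Φ ∧ μ Φ = s}

/-- `price_μ(S,T)`: minimum `μ`-size of a pure Horn CNF with bodies in `𝓑`
whose forward chaining from `S` reaches all of `T`. -/
noncomputable def price (μ : Finset (Finset V × V) → ℕ) (𝓑 : Finset (Finset V))
    (S T : Finset V) : ℕ :=
  sInf {s : ℕ | ∃ Φ : Finset (Finset V × V),
    PureHorn Φ ∧ (∀ c ∈ Φ, c.1 ∈ 𝓑) ∧ ↑T ⊆ hornClosure Φ ↑S ∧ μ Φ = s}

set_option linter.unusedSectionVars false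

lemma mySum_image_le {α β : Type*} [DecidableEq α] [DecidableEq β] (s : Finset α) (g : α → β) (f : β → ℕ) :
    ∑ b ∈ s.image g, f b ≤ ∑ a ∈ s, f (g a) := by
  induction s using Finset.induction with
  | empty => simp
  | insert _ _ h ih =>
    rename_i a s
    rw [Finset.image_insert, Finset.sum_insert h]
    by_cases hg : g a ∈ s.image g
    · rw [Finset.insert_eq_self.2 hg]
      exact le_trans ih (Nat.le_add_left _ _)
    · rw [Finset.sum_insert hg]
      exact add_le_add_right ih _

lemma mySum_filter_le {α : Type*} {q : ℕ} (s : Finset α) (f : α → ℕ)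
    (p : Fin q → α → Prop) [∀ i a, Decidable (p i a)]
    (hex : ∀ a, ∀ i j, i ≠ j → p i a → p j a → False) :
    ∑ i : Fin q, ∑ a ∈ s.filter (p i), f a ≤ ∑ a ∈ s, f a := by
  have h1 : ∀ i : Fin q, ∑ a ∈ s.filter (p i), f a = ∑ a ∈ s, if p i a then f a else 0 :=
    fun i => Finset.sum_filter _ _
  simp_rw [h1]
  rw [Finset.sum_comm]
  apply Finset.sum_le_sum
  intro a _
  have : ∑ i : Fin q, (if p i a then f a else 0) =
      ∑ i ∈ Finset.univ.filter (fun i => p i a), f a := (Finset.sum_filter _ _).symm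
  rw [this, Finset.sum_const, smul_eq_mul]
  have hc : (Finset.univ.filter (fun i => p i a)).card ≤ 1 := by
    apply Finset.card_le_one.2
    intro i hi j hj
    by_contra hij
    exact hex a i j hij (Finset.mem_filter.1 hi).2 (Finset.mem_filter.1 hj).2
  calc (Finset.univ.filter (fun i => p i a)).card * f a ≤ 1 * f a :=
        Nat.mul_le_mul_right _ hc
    _ = f a := one_mul _

lemma subset_hornClosure (Φ : Finset (Finset V × V)) (Z : Set V) : Z ⊆ hornClosure Φ Z := by
  intro v hv
  rw [hornClosure, Set.mem_sInter]
  intro W hW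
  exact hW.1 hv

lemma hornClosed_hornClosure (Φ : Finset (Finset V × V)) (Z : Set V) :
    HornClosed Φ (hornClosure Φ Z) := by
  intro c hc hsub
  rw [hornClosure, Set.mem_sInter]
  intro W hW
  exact hW.2 c hc (hsub.trans (Set.sInter_subset_of_mem hW))

lemma hornClosure_min {Φ : Finset (Finset V × V)} {Z W : Set V}
    (hZ : Z ⊆ W) (hW : HornClosed Φ W) : hornClosure Φ Z ⊆ W :=
  Set.sInter_subset_of_mem ⟨hZ, hW⟩

lemma mem_keyCNF {𝓑 : Finset (Finset V)} {c : Finset V × V} :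
    c ∈ keyCNF 𝓑 ↔ c.1 ∈ 𝓑 ∧ c.2 ∉ c.1 := by
  constructor
  · intro h
    rw [keyCNF, Finset.mem_biUnion] at h
    obtain ⟨B, hB, hc⟩ := h
    rw [Finset.mem_image] at hc
    obtain ⟨v, hv, rfl⟩ := hc
    exact ⟨hB, (Finset.mem_sdiff.1 hv).2⟩
  · rintro ⟨h1, h2⟩
    rw [keyCNF, Finset.mem_biUnion]
    exact ⟨c.1, h1, Finset.mem_image.2 ⟨c.2, Finset.mem_sdiff.2 ⟨Finset.mem_univ _, h2⟩, rfl⟩⟩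

lemma keyClosure_of_mem {𝓑 : Finset (Finset V)} {B0 : Finset V} (h : B0 ∈ 𝓑) :
    hornClosure (keyCNF 𝓑) ↑B0 = Set.univ := by
  apply Set.eq_univ_of_forall
  intro v
  by_cases hv : v ∈ B0
  · exact subset_hornClosure _ _ hv
  · exact hornClosed_hornClosure (keyCNF 𝓑) ↑B0 (B0, v) (mem_keyCNF.2 ⟨h, hv⟩)
      (subset_hornClosure _ _)

lemma keyClosure_of_not {𝓑 : Finset (Finset V)} {Z : Finset V}
    (h : ∀ B ∈ 𝓑, ¬ B ⊆ Z) : hornClosure (keyCNF 𝓑) ↑Z = ↑Z := by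
  apply Set.Subset.antisymm
  · apply hornClosure_min (le_refl _)
    intro c hc hsub
    rw [mem_keyCNF] at hc
    exact absurd (fun x hx => by exact_mod_cast hsub hx) (h c.1 hc.1)
  · exact subset_hornClosure _ _

/-- Every body of a representing CNF contains a member of 𝓑. -/
lemma body_contains {𝓑 : Finset (Finset V)} {Φ : Finset (Finset V × V)}
    (hrep : Represents 𝓑 Φ) {c : Finset V × V} (hc : c ∈ Φ) :
    ∃ B ∈ 𝓑, B ⊆ c.1 := by
  by_contra h
  push_neg at h
  have hkey : hornClosure (keyCNF 𝓑) ↑c.1 = ↑c.1 := keyClosure_of_not h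
  have h2 : c.2 ∈ hornClosure Φ ↑c.1 :=
    hornClosed_hornClosure Φ ↑c.1 c hc (subset_hornClosure _ _)
  rw [hrep.2 c.1, hkey] at h2
  exact (hrep.1 c hc).2 (by exact_mod_cast h2)

/-- Monotonicity of closure when bodies shrink. -/
lemma closure_mono_image {Φ : Finset (Finset V × V)} (r : Finset V → Finset V)
    (hr : ∀ c ∈ Φ, r c.1 ⊆ c.1) (Z : Set V) :
    hornClosure Φ Z ⊆ hornClosure (Φ.image fun c => (r c.1, c.2)) Z := by
  apply hornClosure_min (subset_hornClosure _ _)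
  intro c hc hsub
  have hmem : (r c.1, c.2) ∈ Φ.image fun c => (r c.1, c.2) :=
    Finset.mem_image.2 ⟨c, hc, rfl⟩
  exact hornClosed_hornClosure _ Z (r c.1, c.2) hmem
    (fun x hx => hsub (Finset.coe_subset.2 (hr c hc) hx))

/-- If `𝓑 = 𝓑_1 ∪ ⋯ ∪ 𝓑_q` is a partition with representatives
`B_i ∈ 𝓑_i`, then for each of the six measures,
`OPT_μ(𝓑) ≥ Σ_i min { price_μ(B_i, B) : B ∈ 𝓑 \ 𝓑_i }`. -/
theorem stmt3 {V : Type*} [Fintype V] [DecidableEq V]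
    (𝓑 : Finset (Finset V))
    (hne : ∀ B ∈ 𝓑, B.Nonempty) (hproper : ∀ B ∈ 𝓑, B ≠ Finset.univ)
    (hsperner : ∀ B ∈ 𝓑, ∀ B' ∈ 𝓑, B ⊆ B' → B = B')
    (hcover : ∀ v : V, ∃ B ∈ 𝓑, v ∈ B)
    (hinter : ∀ v : V, ∃ B ∈ 𝓑, v ∉ B)
    (q : ℕ) (𝓟 : Fin q → Finset (Finset V)) (Bsel : Fin q → Finset V)
    (hunion : Finset.univ.biUnion 𝓟 = 𝓑)
    (hdisj : ∀ i j : Fin q, i ≠ j → Disjoint (𝓟 i) (𝓟 j))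
    (hBsel : ∀ i : Fin q, Bsel i ∈ 𝓟 i)
    (μ : Finset (Finset V × V) → ℕ) (hμ : IsMeasure μ) :
    ∑ i : Fin q, sInf {s : ℕ | ∃ B ∈ 𝓑 \ 𝓟 i, price μ 𝓑 (Bsel i) B = s} ≤
      OPT μ 𝓑 := by
  classical
  have hPsub : ∀ i : Fin q, 𝓟 i ⊆ 𝓑 := by
    intro i B hB
    rw [← hunion]
    exact Finset.mem_biUnion.2 ⟨i, Finset.mem_univ i, hB⟩
  have hkeyPure : PureHorn (keyCNF 𝓑) := by
    intro c hc
    rw [mem_keyCNF] at hc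
    exact ⟨hne c.1 hc.1, hc.2⟩
  have hOPTne : {s : ℕ | ∃ Φ : Finset (Finset V × V), Represents 𝓑 Φ ∧ μ Φ = s}.Nonempty :=
    ⟨μ (keyCNF 𝓑), keyCNF 𝓑, ⟨hkeyPure, fun _ => rfl⟩, rfl⟩
  rw [OPT]
  apply le_csInf hOPTne
  rintro s ⟨Φ, hrep, rfl⟩
  -- replace each body by a member of 𝓑 contained in it
  set r : Finset V → Finset V :=
    fun B' => if h : ∃ B ∈ 𝓑, B ⊆ B' then h.choose else B' with hrdef
  have hrR : ∀ B', (∃ B ∈ 𝓑, B ⊆ B') → r B' ∈ 𝓑 ∧ r B' ⊆ B' := by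
    intro B' h
    rw [hrdef]
    simp only [dif_pos h]
    exact ⟨h.choose_spec.1, h.choose_spec.2⟩
  have hbody : ∀ c ∈ Φ, ∃ B ∈ 𝓑, B ⊆ c.1 := fun c hc => body_contains hrep hc
  have hrsub : ∀ c ∈ Φ, r c.1 ⊆ c.1 := fun c hc => (hrR c.1 (hbody c hc)).2
  have hrmem : ∀ c ∈ Φ, r c.1 ∈ 𝓑 := fun c hc => (hrR c.1 (hbody c hc)).1
  set Φ' : Finset (Finset V × V) := Φ.image (fun c => (r c.1, c.2)) with hΦ'def
  have hΦ'body : ∀ c ∈ Φ', c.1 ∈ 𝓑 := by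
    intro c hc
    obtain ⟨d, hd, rfl⟩ := Finset.mem_image.1 hc
    exact hrmem d hd
  have hΦ'pure : PureHorn Φ' := by
    intro c hc
    obtain ⟨d, hd, rfl⟩ := Finset.mem_image.1 hc
    exact ⟨hne _ (hrmem d hd), fun hin => (hrep.1 d hd).2 (hrsub d hd hin)⟩
  have hclos : ∀ Z : Set V, hornClosure Φ Z ⊆ hornClosure Φ' Z :=
    fun Z => closure_mono_image r hrsub Z
  set Ψ : Fin q → Finset (Finset V × V) :=
    fun i => Φ'.filter (fun c => c.1 ∈ 𝓟 i) with hΨdef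
  -- per-part bound
  have key : ∀ i : Fin q,
      sInf {s : ℕ | ∃ B ∈ 𝓑 \ 𝓟 i, price μ 𝓑 (Bsel i) B = s} ≤ μ (Ψ i) := by
    intro i
    by_cases hbi : (𝓑 \ 𝓟 i).Nonempty
    · have hBselB : Bsel i ∈ 𝓑 := hPsub i (hBsel i)
      have hex : ∃ B ∈ 𝓑 \ 𝓟 i, ↑B ⊆ hornClosure (Ψ i) ↑(Bsel i) := by
        by_contra hno
        push_neg at hno
        have hclosed : HornClosed Φ' (hornClosure (Ψ i) ↑(Bsel i)) := by
          intro c hc hsub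
          by_cases hmem : c.1 ∈ 𝓟 i
          · exact hornClosed_hornClosure (Ψ i) _ c (Finset.mem_filter.2 ⟨hc, hmem⟩) hsub
          · exact absurd hsub (hno c.1 (Finset.mem_sdiff.2 ⟨hΦ'body c hc, hmem⟩))
        have huniv : (Set.univ : Set V) ⊆ hornClosure (Ψ i) ↑(Bsel i) := by
          have h1 : hornClosure Φ ↑(Bsel i) = Set.univ := by
            rw [hrep.2, keyClosure_of_mem hBselB]
          calc (Set.univ : Set V) = hornClosure Φ ↑(Bsel i) := h1.symm
            _ ⊆ hornClosure Φ' ↑(Bsel i) := hclos _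
            _ ⊆ hornClosure (Ψ i) ↑(Bsel i) :=
                hornClosure_min (subset_hornClosure _ _) hclosed
        obtain ⟨B, hB⟩ := hbi
        exact hno B hB (fun x _ => huniv (Set.mem_univ x))
      obtain ⟨B, hB, hsubB⟩ := hex
      have hΨpure : PureHorn (Ψ i) := fun c hc => hΦ'pure c (Finset.mem_filter.1 hc).1
      have hΨbody : ∀ c ∈ Ψ i, c.1 ∈ 𝓑 :=
        fun c hc => hΦ'body c (Finset.mem_filter.1 hc).1
      have hprice : price μ 𝓑 (Bsel i) B ≤ μ (Ψ i) :=
        Nat.sInf_le ⟨Ψ i, hΨpure, hΨbody, hsubB, rfl⟩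
      exact le_trans (Nat.sInf_le ⟨B, hB, rfl⟩) hprice
    · rw [Finset.not_nonempty_iff_eq_empty] at hbi
      have hempty : {s : ℕ | ∃ B ∈ 𝓑 \ 𝓟 i, price μ 𝓑 (Bsel i) B = s} = ∅ := by
        simp [hbi]
      rw [hempty, Nat.sInf_empty]
      exact Nat.zero_le _
  -- measure inequalities
  have hexcl : ∀ (c : Finset V × V) (i j : Fin q), i ≠ j →
      c.1 ∈ 𝓟 i → c.1 ∈ 𝓟 j → False :=
    fun c i j hij h1 h2 => (Finset.disjoint_left.1 (hdisj i j hij)) h1 h2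
  have hexcl' : ∀ (B : Finset V) (i j : Fin q), i ≠ j →
      B ∈ 𝓟 i → B ∈ 𝓟 j → False :=
    fun B i j hij h1 h2 => (Finset.disjoint_left.1 (hdisj i j hij)) h1 h2
  have hsub_i : ∀ i : Fin q, (Ψ i).image Prod.fst ⊆
      (Φ'.image Prod.fst).filter (fun B => B ∈ 𝓟 i) := by
    intro i B hB
    obtain ⟨c, hc, rfl⟩ := Finset.mem_image.1 hB
    rw [Finset.mem_filter] at hc ⊢
    exact ⟨Finset.mem_image.2 ⟨c, hc.1, rfl⟩, hc.2⟩
  have himg : Φ'.image Prod.fst = (Φ.image Prod.fst).image r := by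
    rw [hΦ'def, Finset.image_image, Finset.image_image]
    rfl
  have hrB : ∀ B ∈ Φ.image Prod.fst, r B ⊆ B := by
    intro B hB
    obtain ⟨c, hc, rfl⟩ := Finset.mem_image.1 hB
    exact hrsub c hc
  -- generic step-1 bounds
  have hC1 : ∀ f : Finset V × V → ℕ, ∑ i : Fin q, ∑ c ∈ Ψ i, f c ≤ ∑ c ∈ Φ', f c :=
    fun f => mySum_filter_le Φ' f (fun i c => c.1 ∈ 𝓟 i) hexcl
  have hB1 : ∀ f : Finset V → ℕ,
      ∑ i : Fin q, ∑ B ∈ (Ψ i).image Prod.fst, f B ≤ ∑ B ∈ Φ'.image Prod.fst, f B := by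
    intro f
    calc ∑ i : Fin q, ∑ B ∈ (Ψ i).image Prod.fst, f B
        ≤ ∑ i : Fin q, ∑ B ∈ (Φ'.image Prod.fst).filter (fun B => B ∈ 𝓟 i), f B :=
          Finset.sum_le_sum (fun i _ =>
            Finset.sum_le_sum_of_subset (hsub_i i))
      _ ≤ ∑ B ∈ Φ'.image Prod.fst, f B :=
          mySum_filter_le _ f (fun i B => B ∈ 𝓟 i) hexcl'
  -- generic step-2 bounds
  have hB2 : ∀ f : Finset V → ℕ, (∀ B1 B2 : Finset V, B1 ⊆ B2 → f B1 ≤ f B2) →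
      ∑ B ∈ Φ'.image Prod.fst, f B ≤ ∑ B ∈ Φ.image Prod.fst, f B := by
    intro f hf
    rw [himg]
    calc ∑ B ∈ (Φ.image Prod.fst).image r, f B
        ≤ ∑ B ∈ Φ.image Prod.fst, f (r B) := mySum_image_le _ r f
      _ ≤ ∑ B ∈ Φ.image Prod.fst, f B :=
          Finset.sum_le_sum (fun B hB => hf _ _ (hrB B hB))
  have hmeas : ∀ ν : Finset (Finset V × V) → ℕ, IsMeasure ν →
      ∑ i : Fin q, ν (Ψ i) ≤ ν Φ := by
    have hsB : ∑ i : Fin q, sizeB (Ψ i) ≤ sizeB Φ := by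
      simp only [sizeB, Finset.card_eq_sum_ones]
      exact le_trans (hB1 (fun _ => 1)) (hB2 (fun _ => 1) (fun _ _ _ => le_refl 1))
    have hsBA : ∑ i : Fin q, sizeBA (Ψ i) ≤ sizeBA Φ := by
      simp only [sizeBA]
      exact le_trans (hB1 Finset.card)
        (hB2 Finset.card (fun _ _ h => Finset.card_le_card h))
    have hsC : ∑ i : Fin q, sizeC (Ψ i) ≤ sizeC Φ := by
      simp only [sizeC, Finset.card_eq_sum_ones]
      calc ∑ i : Fin q, ∑ _c ∈ Ψ i, 1 ≤ ∑ _c ∈ Φ', 1 := hC1 (fun _ => 1)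
        _ ≤ ∑ _c ∈ Φ, 1 := by
            rw [hΦ'def]
            exact mySum_image_le Φ (fun c => (r c.1, c.2)) (fun _ => 1)
    have hsL : ∑ i : Fin q, sizeL (Ψ i) ≤ sizeL Φ := by
      simp only [sizeL]
      calc ∑ i : Fin q, ∑ c ∈ Ψ i, (c.1.card + 1)
          ≤ ∑ c ∈ Φ', (c.1.card + 1) := hC1 _
        _ ≤ ∑ c ∈ Φ, ((r c.1).card + 1) := by
            rw [hΦ'def]
            exact mySum_image_le Φ (fun c => (r c.1, c.2)) (fun c : Finset V × V => c.1.card + 1)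
        _ ≤ ∑ c ∈ Φ, (c.1.card + 1) :=
            Finset.sum_le_sum (fun c hc =>
              Nat.add_le_add_right (Finset.card_le_card (hrsub c hc)) 1)
    intro ν hν
    rcases hν with h | h | h | h | h | h <;> subst h
    · exact hsB
    · exact hsBA
    · simp only [sizeTA, Finset.sum_add_distrib]
      exact Nat.add_le_add hsBA hsC
    · exact hsC
    · simp only [sizeBC, Finset.sum_add_distrib]
      exact Nat.add_le_add hsB hsC
    · exact hsL
  calc ∑ i : Fin q, sInf {s : ℕ | ∃ B ∈ 𝓑 \ 𝓟 i, price μ 𝓑 (Bsel i) B = s}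
      ≤ ∑ i : Fin q, μ (Ψ i) := Finset.sum_le_sum (fun i _ => key i)
    _ ≤ μ Φ := hmeas μ hμ
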